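/- Let m ≥ 1 and let p : Fin (m+1) → ℝ^m be an affinely independent family of points. For any point x ∈ ℝ^m, x lies in the convex hull of {p_0, …, p_m} if and only if the sum over j of the volumes A(update p j x) of the sub-simplices obtained by replacing p_j with x equals the volume A(p) of the simplex, i.e., x ∈ convexHull ℝ (range p) ↔ ∑_{j=0}^{m} A(Function.update p j x) = A(p). -/

import Mathlib

open MeasureTheory Pointwise

/-- The `m`-dimensional volume of the convex hull of the range of a family of points
in `ℝ^m` (the "area" `A(p)` of the simplex with vertices `p`). -/
noncomputable def simVol {m : ℕ} (p : Fin (m + 1) → EuclideanSpace ℝ (Fin m)) : ℝ :=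
  (volume (convexHull ℝ (Set.range p))).toReal

section Aux

variable {ι : Type*} {V : Type*} [NormedAddCommGroup V] [NormedSpace ℝ V]

/-- Barycentric coordinates in terms of the `basisOf` representation. -/
lemma AffineBasis.repr_basisOf_eq_coord [Fintype ι] [DecidableEq ι]
    (b : AffineBasis ι ℝ V) (i0 : ι) (x : V) (i : {i' : ι // i' ≠ i0}) :
    (b.basisOf i0).repr (x - b i0) i = b.coord ↑i x := by
  have hx : x - b i0 = ∑ i' : {i' : ι // i' ≠ i0}, b.coord ↑i' x • (b.basisOf i0) i' := by
    have h1 : (∑ i' : ι, b.coord i' x • b i') = x := b.linear_combination_coord_eq_self x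
    have h2 : (∑ i' : ι, b.coord i' x) = 1 := b.sum_coord_apply_eq_one x
    have h3 : x - b i0 = ∑ i' : ι, b.coord i' x • (b i' - b i0) := by
      simp only [smul_sub, Finset.sum_sub_distrib, h1, ← Finset.sum_smul, h2, one_smul]
    have h4 : ∑ i' : {i' : ι // i' ≠ i0}, b.coord ↑i' x • (b.basisOf i0) i' =
        ∑ i' ∈ Finset.univ.erase i0, b.coord i' x • (b i' - b i0) := by
      rw [Finset.sum_subtype (p := fun i' => i' ≠ i0) (Finset.univ.erase i0)
        (fun i' => by simp [Finset.mem_erase]) (fun i' => b.coord i' x • (b i' - b i0))]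
      exact Finset.sum_congr rfl fun i' _ => by rw [b.basisOf_apply, vsub_eq_sub]
    rw [h3, h4]
    exact (Finset.sum_erase _ (by simp)).symm
  rw [hx]
  have := (b.basisOf i0).repr_sum_self (fun i' => b.coord ↑i' x)
  rw [this]

/-- The volume scaling identity: replacing the `j`-th vertex of an affine basis with `x`
scales the volume of the convex hull by `|coord j x|`. -/
lemma volume_convexHull_update {m : ℕ} (hm : 1 ≤ m)
    (b : AffineBasis (Fin (m + 1)) ℝ (EuclideanSpace ℝ (Fin m)))
    (j : Fin (m + 1)) (x : EuclideanSpace ℝ (Fin m)) :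
    volume (convexHull ℝ (Set.range (Function.update (⇑b) j x))) =
      ENNReal.ofReal |b.coord j x| * volume (convexHull ℝ (Set.range ⇑b)) := by
  classical
  haveI : Nontrivial (Fin (m + 1)) := Fin.nontrivial_iff_two_le.mpr (by omega)
  obtain ⟨i0, hi0⟩ := exists_ne j
  set q : Fin (m + 1) → EuclideanSpace ℝ (Fin m) := Function.update (⇑b) j x with hq
  set e := b.basisOf i0
  set L : EuclideanSpace ℝ (Fin m) →ₗ[ℝ] EuclideanSpace ℝ (Fin m) := e.constr ℝ (fun i => q ↑i - b i0) with hL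
  -- the affine map realising the vertex replacement
  set g := L.toAffineMap + AffineMap.const ℝ (EuclideanSpace ℝ (Fin m)) (b i0 - L (b i0)) with hg
  have hgy : ∀ y : EuclideanSpace ℝ (Fin m), g y = b i0 + L (y - b i0) := by
    intro y
    show L y + (b i0 - L (b i0)) = b i0 + L (y - b i0)
    rw [map_sub]
    abel
  have hgb : ∀ i : Fin (m + 1), g (b i) = q i := by
    intro i
    rcases eq_or_ne i i0 with rfl | hii0
    · rw [hgy]
      simp [hq, Function.update_of_ne hi0]
    · rw [hgy]
      have : b i - b i0 = e ⟨i, hii0⟩ := by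
        rw [b.basisOf_apply i0 ⟨i, hii0⟩, vsub_eq_sub]
      rw [this, hL, Module.Basis.constr_basis]
      simp
  have himg : Set.range q = g '' Set.range ⇑b := by
    rw [← Set.range_comp]
    refine congrArg _ (funext fun i => (hgb i).symm)
  -- determinant of L
  have hdet : LinearMap.det L = b.coord j x := by
    rw [← LinearMap.det_toMatrix e]
    have hM : LinearMap.toMatrix e e L =
        Matrix.updateCol 1 ⟨j, hi0.symm⟩ (fun i => e.repr (x - b i0) i) := by
      ext i i'
      rw [LinearMap.toMatrix_apply]
      rcases eq_or_ne i' ⟨j, hi0.symm⟩ with rfl | hi'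
      · rw [hL, Module.Basis.constr_basis]
        simp [hq, Matrix.updateCol_self]
      · rw [hL, Module.Basis.constr_basis]
        have hne : (↑i' : Fin (m + 1)) ≠ j := fun h => hi' (Subtype.ext h)
        have : q ↑i' - b i0 = e i' := by
          rw [hq, Function.update_of_ne hne, ← vsub_eq_sub, ← b.basisOf_apply i0 i']
        rw [this, Matrix.updateCol_ne hi']
        simp [Matrix.one_apply, Module.Basis.repr_self, Finsupp.single_apply, eq_comm]
    rw [hM]
    have := Matrix.cramer_one (n := {i' : Fin (m + 1) // i' ≠ i0}) (α := ℝ)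
    have hcr : Matrix.cramer (1 : Matrix {i' : Fin (m + 1) // i' ≠ i0}
        {i' : Fin (m + 1) // i' ≠ i0} ℝ) (fun i => e.repr (x - b i0) i) ⟨j, hi0.symm⟩ =
        e.repr (x - b i0) ⟨j, hi0.symm⟩ := by rw [this]; rfl
    rw [← Matrix.cramer_apply, hcr, b.repr_basisOf_eq_coord i0 x ⟨j, hi0.symm⟩]
  -- volume computation
  rw [himg, ← AffineMap.image_convexHull]
  set S := convexHull ℝ (Set.range ⇑b)
  have hgS : g '' S = b i0 +ᵥ (L '' ((-b i0) +ᵥ S)) := by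
    ext y
    simp only [Set.mem_image, Set.mem_vadd_set, vadd_eq_add]
    constructor
    · rintro ⟨z, hz, rfl⟩
      exact ⟨L (z - b i0), ⟨z - b i0, ⟨z, hz, by abel⟩, rfl⟩, (hgy z).symm⟩
    · rintro ⟨w, ⟨u, ⟨z, hz, rfl⟩, rfl⟩, rfl⟩
      exact ⟨z, hz, by rw [hgy]; congr 1; abel⟩
  rw [hgS, measure_vadd, Measure.addHaar_image_linearMap, hdet, measure_vadd]

end Aux

/-- Convex-hull inclusion test (Eq. (12)): `x` lies in the convex hull of the
affinely independent family `p` iff the sub-simplex volumes obtained by replacing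
each vertex with `x` sum to the volume of the simplex. -/
theorem convexHull_inclusion_test {m : ℕ} (hm : 1 ≤ m)
    (p : Fin (m + 1) → EuclideanSpace ℝ (Fin m)) (hp : AffineIndependent ℝ p)
    (x : EuclideanSpace ℝ (Fin m)) :
    x ∈ convexHull ℝ (Set.range p) ↔
      ∑ j : Fin (m + 1), simVol (Function.update p j x) = simVol p := by
  classical
  have htot : affineSpan ℝ (Set.range p) = ⊤ := by
    rw [hp.affineSpan_eq_top_iff_card_eq_finrank_add_one]
    simp [finrank_euclideanSpace_fin]
  set b : AffineBasis (Fin (m + 1)) ℝ (EuclideanSpace ℝ (Fin m)) := ⟨p, hp, htot⟩ with hb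
  have hbp : ⇑b = p := rfl
  -- the simplex has positive finite volume
  have hV_ne_top : volume (convexHull ℝ (Set.range p)) ≠ ⊤ :=
    (((Set.finite_range p).isCompact_convexHull ℝ).measure_lt_top).ne
  have hV_pos : 0 < volume (convexHull ℝ (Set.range p)) := by
    have h1 := b.centroid_mem_interior_convexHull
    rw [hbp] at h1
    exact MeasureTheory.Measure.measure_pos_of_nonempty_interior _ ⟨_, h1⟩
  have hV_pos' : 0 < simVol p := by
    rw [simVol]
    exact ENNReal.toReal_pos hV_pos.ne' hV_ne_top
  -- the volume scaling identity, in real numbers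
  have hkey : ∀ j, simVol (Function.update p j x) = |b.coord j x| * simVol p := by
    intro j
    have := volume_convexHull_update hm b j x
    rw [hbp] at this
    rw [simVol, this, ENNReal.toReal_mul, ENNReal.toReal_ofReal (abs_nonneg _), simVol]
  have hsum : ∑ j : Fin (m + 1), simVol (Function.update p j x) =
      (∑ j : Fin (m + 1), |b.coord j x|) * simVol p := by
    rw [Finset.sum_mul]
    exact Finset.sum_congr rfl fun j _ => hkey j
  have hone : (∑ j : Fin (m + 1), b.coord j x) = 1 := b.sum_coord_apply_eq_one x
  rw [hsum]
  have hmem : x ∈ convexHull ℝ (Set.range p) ↔ ∀ j, 0 ≤ b.coord j x := by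
    rw [← hbp, b.convexHull_eq_nonneg_coord]; rfl
  rw [hmem]
  constructor
  · intro h
    have : ∀ j : Fin (m + 1), |b.coord j x| = b.coord j x := fun j => abs_of_nonneg (h j)
    rw [Finset.sum_congr rfl fun j _ => this j, hone, one_mul]
  · intro h
    have hs1 : (∑ j : Fin (m + 1), |b.coord j x|) = 1 := by
      have := mul_right_cancel₀ hV_pos'.ne' (h.trans (one_mul (simVol p)).symm)
      exact this
    have hzero : ∑ j : Fin (m + 1), (|b.coord j x| - b.coord j x) = 0 := by
      rw [Finset.sum_sub_distrib, hs1, hone, sub_self]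
    have hterm : ∀ j ∈ Finset.univ, (0:ℝ) ≤ |b.coord j x| - b.coord j x :=
      fun j _ => sub_nonneg.mpr (le_abs_self _)
    intro j
    have := (Finset.sum_eq_zero_iff_of_nonneg hterm).mp hzero j (Finset.mem_univ j)
    have habs : |b.coord j x| = b.coord j x := by linarith
    rw [← habs]; exact abs_nonneg _
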